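/- Let c : H → ℝ be a convex function on a real Hilbert space and C = {x ∈ H : c(x) ≤ 0}. Suppose there exists w ∈ C with c(w) < 0. Then for every y ∈ H with c(y) > 0, the distance from y to C satisfies dist(y, C) ≤ ‖y − w‖ · c(y) / (c(y) − c(w)). -/

import Mathlib

open RealInnerProductSpace

theorem dist_le_of_slater
    {H : Type*} [NormedAddCommGroup H] [InnerProductSpace ℝ H]
    (c : H → ℝ) (hc : ConvexOn ℝ Set.univ c)
    (w : H) (hw : c w < 0)
    (y : H) (hy : 0 < c y) :
    Metric.infDist y {x : H | c x ≤ 0} ≤ ‖y - w‖ * c y / (c y - c w) := by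
  have hd : 0 < c y - c w := by linarith
  set t : ℝ := c y / (c y - c w) with ht
  have ht0 : 0 ≤ t := le_of_lt (div_pos hy hd)
  have ht1 : t ≤ 1 := by
    rw [ht, div_le_one hd]; linarith
  set z : H := (1 - t) • y + t • w with hz
  have hcz : c z ≤ 0 := by
    have := hc.2 (Set.mem_univ y) (Set.mem_univ w) (by linarith : (0:ℝ) ≤ 1 - t) ht0
      (by ring)
    have heq : (1 - t) * c y + t * c w = 0 := by
      have h1 : t * (c y - c w) = c y := by rw [ht]; exact div_mul_cancel₀ _ (ne_of_gt hd)
      linear_combination -h1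
    calc c z ≤ (1 - t) * c y + t * c w := this
      _ = 0 := heq
  have hmem : z ∈ {x : H | c x ≤ 0} := hcz
  calc Metric.infDist y {x : H | c x ≤ 0} ≤ dist y z := Metric.infDist_le_dist_of_mem hmem
    _ = ‖y - z‖ := dist_eq_norm y z
    _ = ‖t • (y - w)‖ := by
        congr 1
        rw [hz]
        module
    _ = t * ‖y - w‖ := by rw [norm_smul, Real.norm_of_nonneg ht0]
    _ = ‖y - w‖ * c y / (c y - c w) := by rw [ht]; ring
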